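/- (Corollary 1.) Assume Δ = 0, γ ≠ 4, α ≠ 0 and α ≠ 4. Let λ₁, λ₂ ∈ K and set s₁' := s₁ ∘ τ(λ₁·c₁) and s₂' := s₂ ∘ τ(λ₂·c₂). Then for every integer k ≥ 1 one has (s₁ ∘ s₂)^k = id_M if and only if (s₁' ∘ s₂')^k = id_M; in particular s₁ ∘ s₂ and s₁' ∘ s₂' have the same order. -/

import Mathlib

noncomputable section

variable {K : Type*} [Field K] [CharZero K]

/-- The linear functional `x ↦ c 0 * x 0 + c 1 * x 1 + c 2 * x 2` on `K³`. -/
def lf (c : Fin 3 → K) : (Fin 3 → K) →ₗ[K] K :=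
  c 0 • LinearMap.proj 0 + c 1 • LinearMap.proj 1 + c 2 • LinearMap.proj 2

/-- `s₁ : x ↦ x − (2x₁ − α x₂ − β x₃)·a₁` where `a₁ = Pi.single 0 1`. -/
def s1 (α β : K) : Module.End K (Fin 3 → K) :=
  LinearMap.id - (lf ![2, -α, -β]).smulRight (Pi.single 0 1)

/-- `s₂ : x ↦ x − (−x₁ + 2x₂ − l·x₃)·a₂`. -/
def s2 (l : K) : Module.End K (Fin 3 → K) :=
  LinearMap.id - (lf ![-1, 2, -l]).smulRight (Pi.single 1 1)

/-- `s₃ : x ↦ x − (−x₁ − m·x₂ + 2x₃)·a₃`. -/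
def s3 (m : K) : Module.End K (Fin 3 → K) :=
  LinearMap.id - (lf ![-1, -m, 2]).smulRight (Pi.single 2 1)

/-- `b = b₁ = (4−γ)a₁ + (l+2)a₂ + (m+2)a₃`, with `γ = l·m`. -/
def bvec (l m : K) : Fin 3 → K := ![4 - l * m, l + 2, m + 2]

/-- `b₂ = (2α+βm)a₁ + (4−β)a₂ + (α+2m)a₃`. -/
def b2vec (α β l m : K) : Fin 3 → K := ![2*α + β*m, 4 - β, α + 2*m]

/-- `b₃ = (2β+αl)a₁ + (β+2l)a₂ + (4−α)a₃`. -/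
def b3vec (α β l m : K) : Fin 3 → K := ![2*β + α*l, β + 2*l, 4 - α]

/-- `τ(λ,μ) : a₁ ↦ a₁ + ω·b, a₂ ↦ a₂ + λ·b, a₃ ↦ a₃ + μ·b`,
where `ω = −(λ(l+2) + μ(m+2))/(4−γ)`. -/
def tau (l m lam mu : K) : Module.End K (Fin 3 → K) :=
  LinearMap.id +
    (lf ![-(lam*(l+2) + mu*(m+2))/(4 - l*m), lam, mu]).smulRight (bvec l m)

/-- `τ` applied to a vector `(λ,μ) ∈ K²`. -/
def tauv (l m : K) (v : K × K) : Module.End K (Fin 3 → K) := tau l m v.1 v.2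

def c1 (α β : K) : K × K := (α, β)
def c2 (l : K) : K × K := (-2, l)
def c3 (m : K) : K × K := (m, -2)

/-- `z₁ : a₁ ↦ −a₁ + (2/(4−γ))·b, a₂ ↦ −a₂, a₃ ↦ −a₃`. -/
def z1 (l m : K) : Module.End K (Fin 3 → K) :=
  -LinearMap.id + (lf ![2/(4 - l*m), 0, 0]).smulRight (bvec l m)

/-- `z₂ : a₂ ↦ −a₂ + (2/(l+2))·b, a₁ ↦ −a₁, a₃ ↦ −a₃`. -/
def z2 (l m : K) : Module.End K (Fin 3 → K) :=
  -LinearMap.id + (lf ![0, 2/(l+2), 0]).smulRight (bvec l m)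

/-- `z₃ : a₃ ↦ −a₃ + (2/(m+2))·b, a₁ ↦ −a₁, a₂ ↦ −a₂`. -/
def z3 (l m : K) : Module.End K (Fin 3 → K) :=
  -LinearMap.id + (lf ![0, 0, 2/(m+2)]).smulRight (bvec l m)

/-- The linear functional `(λ,μ) ↦ c.1·λ + c.2·μ` on `K²`. -/
def lf2 (c : K × K) : (K × K) →ₗ[K] K := c.1 • LinearMap.fst K K K + c.2 • LinearMap.snd K K K

/-- `σ₁(λ,μ) = (λ,μ) − ((λ(l+2)+μ(m+2))/(4−γ))·(α,β)`. -/
def sigma1 (α β l m : K) : Module.End K (K × K) :=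
  LinearMap.id - (lf2 ((l+2)/(4 - l*m), (m+2)/(4 - l*m))).smulRight (α, β)

/-- `σ₂(λ,μ) = (λ,μ) + λ·(−2,l)`. -/
def sigma2 (l : K) : Module.End K (K × K) :=
  LinearMap.id + (LinearMap.fst K K K).smulRight ((-2 : K), l)

/-- `σ₃(λ,μ) = (λ,μ) + μ·(m,−2)`. -/
def sigma3 (m : K) : Module.End K (K × K) :=
  LinearMap.id + (LinearMap.snd K K K).smulRight (m, (-2 : K))

/-- The sequence `u_x` : `u_x(0)=0, u_x(1)=u_x(2)=1, u_x(3)=x−1,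
u_x(n+4) = (x−2)·u_x(n+2) − u_x(n)`. -/
def useq (x : K) : ℕ → K
  | 0 => 0
  | 1 => 1
  | 2 => 1
  | 3 => x - 1
  | (n+4) => (x - 2) * useq x (n+2) - useq x n

namespace Aux12

set_option linter.unusedSectionVars false
set_option linter.unreachableTactic false
set_option linter.unusedTactic false

lemma lf_apply (c x : Fin 3 → K) : lf c x = c 0 * x 0 + c 1 * x 1 + c 2 * x 2 := by
  simp [lf]

/-- the reflection with functional f and vector u -/
def refl (f : (Fin 3 → K) →ₗ[K] K) (u : Fin 3 → K) : Module.End K (Fin 3 → K) :=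
  1 - f.smulRight u

lemma refl_apply (f : (Fin 3 → K) →ₗ[K] K) (u x : Fin 3 → K) :
    refl f u x = x - f x • u := rfl

lemma refl_sq (f : (Fin 3 → K) →ₗ[K] K) (u : Fin 3 → K) (hu : f u = 2) :
    refl f u * refl f u = 1 := by
  refine LinearMap.ext fun x => ?_
  have : f (refl f u x) = - f x := by
    rw [refl_apply, map_sub, map_smul, hu]; ring_nf
  rw [Module.End.mul_apply, refl_apply, this, Module.End.one_apply, refl_apply]
  module

/-- key power lemma -/
lemma pow_dir (T T' : Module.End K (Fin 3 → K)) (b : Fin 3 → K) (g : (Fin 3 → K) →ₗ[K] K)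
    (hT' : ∀ x, T' x = T x + g x • b) (hTb : T b = b) (hgb : g b = 0)
    (hfix : ∀ x : Fin 3 → K, T x = x → ∃ c : K, x = c • b) (k : ℕ) (hk : T ^ k = 1) :
    T' ^ k = 1 := by
  have key : ∀ (j : ℕ) (x : Fin 3 → K),
      (T' ^ j) x = (T ^ j) x + (∑ i ∈ Finset.range j, g ((T ^ i) x)) • b := by
    intro j
    induction j with
    | zero => intro x; simp
    | succ n ih =>
        intro x
        have h1 : (T' ^ (n+1)) x = T' ((T' ^ n) x) := by rw [pow_succ']; rfl
        have h2 : (T ^ (n+1)) x = T ((T ^ n) x) := by rw [pow_succ']; rfl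
        rw [h1, ih x, hT', map_add, map_smul, hTb, map_add, map_smul, hgb, smul_zero,
          add_zero, Finset.sum_range_succ, h2, add_smul]
        abel
  refine LinearMap.ext fun x => ?_
  have hSfix : T (∑ i ∈ Finset.range k, (T ^ i) x) = ∑ i ∈ Finset.range k, (T ^ i) x := by
    rw [map_sum]
    cases k with
    | zero => simp
    | succ n =>
      have lhs : ∀ i, T ((T ^ i) x) = (T ^ (i+1)) x := by
        intro i; rw [pow_succ']; rfl
      simp only [lhs]
      rw [Finset.sum_range_succ, Finset.sum_range_succ']
      simp only [pow_zero, Module.End.one_apply]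
      rw [show (T ^ (n + 1)) x = x from by rw [hk]; rfl]
  obtain ⟨c, hc⟩ := hfix _ hSfix
  have hsum : (∑ i ∈ Finset.range k, g ((T ^ i) x)) = 0 := by
    have : (∑ i ∈ Finset.range k, g ((T ^ i) x)) = g (∑ i ∈ Finset.range k, (T ^ i) x) := by
      rw [map_sum]
    rw [this, hc, map_smul, hgb, smul_zero]
  rw [key k x, hsum, zero_smul, add_zero, hk]

variable {α β l m : K}

lemma single0 : (Pi.single 0 1 : Fin 3 → K) = ![1,0,0] := by
  funext i; fin_cases i <;> simp

lemma single1 : (Pi.single 1 1 : Fin 3 → K) = ![0,1,0] := by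
  funext i; fin_cases i <;> simp

lemma hphi1b (hΔ : 8 - 2*α - 2*β - 2*(l*m) - (α*l + β*m) = 0) :
    lf ![2, -α, -β] (bvec l m) = 0 := by
  rw [lf_apply]
  simp [bvec]
  linear_combination hΔ

lemma hphi2b : lf ![-1, 2, -l] (bvec l m) = 0 := by
  rw [lf_apply]
  simp [bvec]
  ring

lemma hphi1a1 : lf ![2, -α, -β] (Pi.single 0 1 : Fin 3 → K) = 2 := by
  rw [lf_apply]
  simp

lemma hphi2a2 : lf ![-1, 2, -l] (Pi.single 1 1 : Fin 3 → K) = 2 := by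
  rw [lf_apply]
  simp

lemma hm2 (hΔ : 8 - 2*α - 2*β - 2*(l*m) - (α*l + β*m) = 0) (hγ : l*m ≠ 4) (hα4 : α ≠ 4) :
    m + 2 ≠ 0 := by
  intro h
  have hm : m = -2 := by linear_combination h
  subst hm
  have h1 : (4 - α) * (l + 2) = 0 := by linear_combination hΔ
  rcases mul_eq_zero.1 h1 with h2 | h2
  · exact hα4 (by linear_combination -h2)
  · have hl : l = -2 := by linear_combination h2
    exact hγ (by rw [hl]; ring)

lemma hfix0 (hΔ : 8 - 2*α - 2*β - 2*(l*m) - (α*l + β*m) = 0) (hγ : l*m ≠ 4) (hα4 : α ≠ 4)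
    (x : Fin 3 → K) (h1 : lf ![2, -α, -β] x = 0) (h2 : lf ![-1, 2, -l] x = 0) :
    x = (x 2 / (m + 2)) • bvec l m := by
  have hm : m + 2 ≠ 0 := hm2 hΔ hγ hα4
  have ha : (4 : K) - α ≠ 0 := fun h => hα4 (by linear_combination -h)
  rw [lf_apply] at h1 h2
  simp at h1 h2
  have hc1 : x 1 * (m + 2) = x 2 * (l + 2) := by
    have key : (4 - α) * (x 1 * (m + 2) - x 2 * (l + 2)) = 0 := by
      linear_combination (m+2) * h1 + (2*(m+2)) * h2 - x 2 * hΔ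
    rcases mul_eq_zero.1 key with h | h
    · exact absurd h ha
    · linear_combination h
  have hc0 : x 0 * (m + 2) = x 2 * (4 - l * m) := by
    linear_combination -(m+2) * h2 + 2 * hc1
  funext i
  fin_cases i <;> simp [bvec] <;> field_simp <;>
    first
      | linear_combination hc0
      | linear_combination hc1
      | ring

lemma indep (hΔ : 8 - 2*α - 2*β - 2*(l*m) - (α*l + β*m) = 0) (hγ : l*m ≠ 4) (hα4 : α ≠ 4)
    (lam mu p q : K)
    (h : p • ((Pi.single 0 1 : Fin 3 → K) + lam • bvec l m)
       = q • ((Pi.single 1 1 : Fin 3 → K) + mu • bvec l m)) :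
    p = 0 ∧ q = 0 := by
  have hm : m + 2 ≠ 0 := hm2 hΔ hγ hα4
  rw [single0, single1] at h
  have e0 := congrFun h 0
  have e1 := congrFun h 1
  have e2 := congrFun h 2
  simp [bvec] at e0 e1 e2
  have h3 : (p * lam - q * mu) * (m + 2) = 0 := by linear_combination e2
  have hpq : p * lam - q * mu = 0 := by
    rcases mul_eq_zero.1 h3 with h | h
    · exact h
    · exact absurd h hm
  have hp : p = 0 := by linear_combination e0 - (4 - l*m) * hpq
  subst hp
  have hqmu : q * mu = 0 := by linear_combination -hpq
  refine ⟨rfl, ?_⟩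
  linear_combination -e1 - (l+2) * hqmu

/-- fixed points of the twisted product are multiples of b -/
lemma fixT (hΔ : 8 - 2*α - 2*β - 2*(l*m) - (α*l + β*m) = 0) (hγ : l*m ≠ 4) (hα4 : α ≠ 4)
    (p q : K) (x : Fin 3 → K)
    (hx : (refl (lf ![2, -α, -β]) (Pi.single 0 1 + p • bvec l m) *
           refl (lf ![-1, 2, -l]) (Pi.single 1 1 + q • bvec l m)) x = x) :
    ∃ c : K, x = c • bvec l m := by
  set φ1 : (Fin 3 → K) →ₗ[K] K := lf ![2, -α, -β] with hφ1
  set φ2 : (Fin 3 → K) →ₗ[K] K := lf ![-1, 2, -l] with hφ2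
  set u : Fin 3 → K := Pi.single 0 1 + p • bvec l m with hu_def
  set v : Fin 3 → K := Pi.single 1 1 + q • bvec l m with hv_def
  have hu : φ1 u = 2 := by
    rw [hu_def, map_add, map_smul, hφ1, hphi1a1, hphi1b hΔ, smul_zero, add_zero]
  have h1 : refl φ1 u * (refl φ1 u * refl φ2 v) = refl φ2 v := by
    rw [← mul_assoc, refl_sq _ _ hu, one_mul]
  have h2 : refl φ2 v x = refl φ1 u x := by
    calc refl φ2 v x = (refl φ1 u * (refl φ1 u * refl φ2 v)) x := by rw [h1]
      _ = refl φ1 u ((refl φ1 u * refl φ2 v) x) := rfl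
      _ = refl φ1 u x := by rw [hx]
  rw [refl_apply, refl_apply] at h2
  have h3 : φ1 x • u = φ2 x • v := by
    have := sub_right_injective h2
    linear_combination (norm := module) -this
  obtain ⟨hp0, hq0⟩ := indep hΔ hγ hα4 p q (φ1 x) (φ2 x) h3
  exact ⟨x 2 / (m + 2), hfix0 hΔ hγ hα4 x hp0 hq0⟩

/-- T b = b -/
lemma Tb (hΔ : 8 - 2*α - 2*β - 2*(l*m) - (α*l + β*m) = 0)
    (p q : K) :
    (refl (lf ![2, -α, -β]) (Pi.single 0 1 + p • bvec l m) *
     refl (lf ![-1, 2, -l]) (Pi.single 1 1 + q • bvec l m)) (bvec l m) = bvec l m := by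
  have h2 : refl (lf ![-1, 2, -l]) (Pi.single 1 1 + q • bvec l m) (bvec l m) = bvec l m := by
    rw [refl_apply, hphi2b, zero_smul, sub_zero]
  rw [Module.End.mul_apply, h2, refl_apply, hphi1b hΔ, zero_smul, sub_zero]

/-- difference of two twisted products is rank one along b -/
lemma diff (hΔ : 8 - 2*α - 2*β - 2*(l*m) - (α*l + β*m) = 0)
    (p q p' q' : K) (x : Fin 3 → K) :
    (refl (lf ![2, -α, -β]) (Pi.single 0 1 + p' • bvec l m) *
     refl (lf ![-1, 2, -l]) (Pi.single 1 1 + q' • bvec l m)) x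
    = (refl (lf ![2, -α, -β]) (Pi.single 0 1 + p • bvec l m) *
       refl (lf ![-1, 2, -l]) (Pi.single 1 1 + q • bvec l m)) x
      + ((-(q'-q)) • (lf ![-1, 2, -l])
          - (p'-p) • ((lf ![2, -α, -β])
              - (lf ![2, -α, -β] (Pi.single 1 1 : Fin 3 → K)) • (lf ![-1, 2, -l]))) x
        • bvec l m := by
  simp only [Module.End.mul_apply, refl_apply, map_sub, map_add, map_smul,
    LinearMap.sub_apply, LinearMap.smul_apply, hphi1b hΔ, hphi2b, smul_eq_mul,
    mul_zero, add_zero, sub_zero, smul_zero]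
  module

lemma gb (hΔ : 8 - 2*α - 2*β - 2*(l*m) - (α*l + β*m) = 0) (p q p' q' : K) :
    ((-(q'-q)) • (lf ![-1, 2, -l])
      - (p'-p) • ((lf ![2, -α, -β])
          - (lf ![2, -α, -β] (Pi.single 1 1 : Fin 3 → K)) • (lf ![-1, 2, -l])))
      (bvec l m) = 0 := by
  simp only [LinearMap.sub_apply, LinearMap.smul_apply, hphi1b hΔ, hphi2b, smul_eq_mul,
    mul_zero, sub_zero]

/-- the one-sided transfer lemma -/
lemma dir (hΔ : 8 - 2*α - 2*β - 2*(l*m) - (α*l + β*m) = 0) (hγ : l*m ≠ 4) (hα4 : α ≠ 4)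
    (p q p' q' : K) (k : ℕ)
    (hk : (refl (lf ![2, -α, -β]) (Pi.single 0 1 + p • bvec l m) *
           refl (lf ![-1, 2, -l]) (Pi.single 1 1 + q • bvec l m)) ^ k = 1) :
    (refl (lf ![2, -α, -β]) (Pi.single 0 1 + p' • bvec l m) *
     refl (lf ![-1, 2, -l]) (Pi.single 1 1 + q' • bvec l m)) ^ k = 1 := by
  refine pow_dir _ _ (bvec l m)
    ((-(q'-q)) • (lf ![-1, 2, -l])
      - (p'-p) • ((lf ![2, -α, -β])
          - (lf ![2, -α, -β] (Pi.single 1 1 : Fin 3 → K)) • (lf ![-1, 2, -l])))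
    (fun x => diff hΔ p q p' q' x) (Tb hΔ p q) (gb hΔ p q p' q')
    (fun x hx => fixT hΔ hγ hα4 p q x hx) k hk

/-- computation of s1 ∘ τ(lam1 c1) -/
lemma comp1 (hΔ : 8 - 2*α - 2*β - 2*(l*m) - (α*l + β*m) = 0) (hγ : l*m ≠ 4) (lam1 : K) :
    s1 α β * tauv l m (lam1 • c1 α β)
      = refl (lf ![2, -α, -β]) (Pi.single 0 1 + lam1 • bvec l m) := by
  have h4 : (4 : K) - l*m ≠ 0 := fun h => hγ (by linear_combination -h)
  have hfun : lf ![-((lam1 • c1 α β).1*(l+2) + (lam1 • c1 α β).2*(m+2))/(4 - l*m),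
      (lam1 • c1 α β).1, (lam1 • c1 α β).2] = (-lam1) • lf ![2, -α, -β] := by
    refine LinearMap.ext fun x => ?_
    rw [lf_apply, LinearMap.smul_apply, lf_apply]
    simp [c1, smul_eq_mul]
    field_simp
    ring_nf
    have hinv : (4 - m*l) * (4 - m*l)⁻¹ = 1 := mul_inv_cancel₀ (by rw [mul_comm m l]; exact h4)
    linear_combination ((lam1 * x 0) * (4 - m*l)⁻¹) * hΔ - 2 * lam1 * x 0 * hinv
  refine LinearMap.ext fun x => ?_
  rw [Module.End.mul_apply]
  show s1 α β (tau l m (lam1 • c1 α β).1 (lam1 • c1 α β).2 x) = _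
  rw [tau, refl_apply]
  simp only [LinearMap.add_apply, LinearMap.id_apply, LinearMap.smulRight_apply]
  rw [show (lf ![-((lam1 • c1 α β).1*(l+2) + (lam1 • c1 α β).2*(m+2))/(4 - l*m),
      (lam1 • c1 α β).1, (lam1 • c1 α β).2]) x = ((-lam1) • lf ![2, -α, -β]) x from by
    rw [hfun]]
  rw [s1]
  simp only [LinearMap.sub_apply, LinearMap.id_apply, LinearMap.smulRight_apply,
    map_add, map_smul, hphi1b hΔ, LinearMap.smul_apply, smul_eq_mul, mul_zero,
    smul_zero, add_zero]
  module

/-- computation of s2 ∘ τ(lam2 c2) -/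
lemma comp2 (hΔ : 8 - 2*α - 2*β - 2*(l*m) - (α*l + β*m) = 0) (hγ : l*m ≠ 4) (lam2 : K) :
    s2 l * tauv l m (lam2 • c2 l)
      = refl (lf ![-1, 2, -l]) (Pi.single 1 1 + lam2 • bvec l m) := by
  have h4 : (4 : K) - l*m ≠ 0 := fun h => hγ (by linear_combination -h)
  have hfun : lf ![-((lam2 • c2 l).1*(l+2) + (lam2 • c2 l).2*(m+2))/(4 - l*m),
      (lam2 • c2 l).1, (lam2 • c2 l).2] = (-lam2) • lf ![-1, 2, -l] := by
    refine LinearMap.ext fun x => ?_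
    rw [lf_apply, LinearMap.smul_apply, lf_apply]
    simp [c2, smul_eq_mul]
    field_simp
    ring_nf
  refine LinearMap.ext fun x => ?_
  rw [Module.End.mul_apply]
  show s2 l (tau l m (lam2 • c2 l).1 (lam2 • c2 l).2 x) = _
  rw [tau, refl_apply]
  simp only [LinearMap.add_apply, LinearMap.id_apply, LinearMap.smulRight_apply]
  rw [show (lf ![-((lam2 • c2 l).1*(l+2) + (lam2 • c2 l).2*(m+2))/(4 - l*m),
      (lam2 • c2 l).1, (lam2 • c2 l).2]) x = ((-lam2) • lf ![-1, 2, -l]) x from by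
    rw [hfun]]
  rw [s2]
  simp only [LinearMap.sub_apply, LinearMap.id_apply, LinearMap.smulRight_apply,
    map_add, map_smul, hphi2b, LinearMap.smul_apply, smul_eq_mul, mul_zero,
    smul_zero, add_zero]
  module

lemma s1_eq : s1 α β = refl (lf ![2, -α, -β]) (Pi.single 0 1 + (0:K) • bvec l m) := by
  rw [zero_smul, add_zero]
  rfl

lemma s2_eq : s2 l = refl (lf ![-1, 2, -l]) (Pi.single 1 1 + (0:K) • bvec l m) := by
  rw [zero_smul, add_zero]
  rfl

end Aux12

/-- Corollary 1: with `Δ = 0`, `γ ≠ 4`, `α ≠ 0`, `α ≠ 4`,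
`s₁' = s₁ ∘ τ(λ₁c₁)`, `s₂' = s₂ ∘ τ(λ₂c₂)`: for every `k ≥ 1`,
`(s₁s₂)^k = 1 ↔ (s₁'s₂')^k = 1`; in particular `s₁s₂` and `s₁'s₂'` have the
same order. -/
theorem stmt12 (α β l m : K)
    (hΔ : 8 - 2*α - 2*β - 2*(l*m) - (α*l + β*m) = 0) (hγ : l*m ≠ 4)
    (hα0 : α ≠ 0) (hα4 : α ≠ 4) (lam1 lam2 : K) :
    (∀ k : ℕ, 1 ≤ k →
      ((s1 α β * s2 l)^k = 1 ↔
        ((s1 α β * tauv l m (lam1 • c1 α β)) * (s2 l * tauv l m (lam2 • c2 l)))^k = 1)) ∧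
    orderOf (s1 α β * s2 l)
      = orderOf ((s1 α β * tauv l m (lam1 • c1 α β)) * (s2 l * tauv l m (lam2 • c2 l))) := by
  have key : ∀ k : ℕ,
      ((s1 α β * s2 l)^k = 1 ↔
        ((s1 α β * tauv l m (lam1 • c1 α β)) * (s2 l * tauv l m (lam2 • c2 l)))^k = 1) := by
    intro k
    rw [Aux12.comp1 hΔ hγ lam1, Aux12.comp2 hΔ hγ lam2,
      Aux12.s1_eq (α := α) (β := β) (l := l) (m := m),
      Aux12.s2_eq (l := l) (m := m)]
    exact ⟨Aux12.dir hΔ hγ hα4 0 0 lam1 lam2 k, Aux12.dir hΔ hγ hα4 lam1 lam2 0 0 k⟩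
  refine ⟨fun k _ => key k, ?_⟩
  rw [orderOf_eq_orderOf_iff]
  exact key

end
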